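/- On every compact subset K of the open set Ω = { z = x + i·y : x > 0, y ≠ 0 } of the complex plane, the functions z ↦ c_N(z) = (∑_{n=1}^{N} n^{-z}) + (N+1)^{-z}/(1−z) · (1 − x − y/tan(y·ln((N+2)/(N+1)))) converge uniformly, as N → ∞, to the analytically continued Riemann zeta function z ↦ ζ(z). -/

import Mathlib

open Filter

/-- The `N`-th partial sum of the Riemann series: `ζ_N(z) = ∑_{n=1}^{N} n^{-z}`. -/
noncomputable def zetaPartial (z : ℂ) (N : ℕ) : ℂ :=
  ∑ n ∈ Finset.Icc 1 N, (n : ℂ) ^ (-z)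

/-- The correction term
`r_N(z) = (N+1)^{-z}/(1−z) · (1 − x − y/tan(y·ln((N+2)/(N+1))))` where `x = Re z`, `y = Im z`. -/
noncomputable def radialCorrection (z : ℂ) (N : ℕ) : ℂ :=
  ((N : ℂ) + 1) ^ (-z) / (1 - z) *
    ((1 - z.re - z.im / Real.tan (z.im * Real.log (((N : ℝ) + 2) / ((N : ℝ) + 1))) : ℝ) : ℂ)

/-- The radial-convergence sequence `c_N(z) = ζ_N(z) + r_N(z)`. -/
noncomputable def radialSeq (z : ℂ) (N : ℕ) : ℂ :=
  zetaPartial z N + radialCorrection z N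


open Filter Complex Finset Topology

noncomputable def gTerm (n : ℕ) (z : ℂ) : ℂ :=
  (n : ℂ) ^ (-z) - ((n : ℂ) ^ (1 - z) - ((n : ℂ) + 1) ^ (1 - z)) / (z - 1)

lemma hasDerivAt_ofReal_cpow' {x : ℝ} (hx : 0 < x) {w : ℂ} (hw : w ≠ 0) :
    HasDerivAt (fun y : ℝ => (y : ℂ) ^ w) (w * (x : ℂ) ^ (w - 1)) x := by
  have h := hasDerivAt_ofReal_cpow_const' (ne_of_gt hx)
    (show w - 1 ≠ -1 by
      intro h; exact hw (by rw [sub_eq_iff_eq_add] at h; rw [h]; ring))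
  rw [sub_add_cancel] at h
  have h2 := h.const_mul w
  have : (fun y : ℝ => (y : ℂ) ^ w) = fun y : ℝ => w * ((y : ℂ) ^ w / w) := by
    funext y; field_simp
  rw [this]
  exact h2

lemma gTerm_norm_le {z : ℂ} (hre : 0 < z.re) (hz1 : z ≠ 1) {n : ℕ} (hn : 1 ≤ n) :
    ‖gTerm n z‖ ≤ ‖z‖ * (n : ℝ) ^ (-z.re - 1) := by
  set M : ℝ := ‖z‖ * (n : ℝ) ^ (-z.re - 1) with hM
  have hn0 : (0 : ℝ) < n := by exact_mod_cast hn
  have hw0 : -z ≠ 0 := by simpa using fun h => by simp [h] at hre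
  have hw1 : (1 : ℂ) - z ≠ 0 := sub_ne_zero.2 (Ne.symm hz1)
  -- the inner function ψ and its derivative bound on [n, n+1]
  set ψ : ℝ → ℂ := fun t => (t : ℂ) ^ (-z) with hψ
  have hψd : ∀ t ∈ Set.Icc (n : ℝ) (n + 1),
      HasDerivWithinAt ψ (-z * (t : ℂ) ^ (-z - 1)) (Set.Icc (n : ℝ) (n + 1)) t := by
    intro t ht
    exact (hasDerivAt_ofReal_cpow' (lt_of_lt_of_le hn0 ht.1) hw0).hasDerivWithinAt
  have hψb : ∀ t ∈ Set.Icc (n : ℝ) (n + 1), ‖-z * (t : ℂ) ^ (-z - 1)‖ ≤ M := by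
    intro t ht
    have ht0 : (0 : ℝ) < t := lt_of_lt_of_le hn0 ht.1
    rw [norm_mul, norm_neg]
    rw [Complex.norm_cpow_eq_rpow_re_of_pos ht0]
    have : (-z - 1).re = -z.re - 1 := by simp
    rw [this, hM]
    have : t ^ (-z.re - 1) ≤ (n : ℝ) ^ (-z.re - 1) :=
      Real.rpow_le_rpow_of_nonpos hn0 ht.1 (by linarith)
    exact mul_le_mul_of_nonneg_left this (norm_nonneg z)
  have inner : ∀ t ∈ Set.Icc (n : ℝ) (n + 1), ‖ψ t - ψ n‖ ≤ M := by
    intro t ht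
    have h := (convex_Icc (n : ℝ) (n + 1)).norm_image_sub_le_of_norm_hasDerivWithin_le
      hψd hψb (Set.left_mem_Icc.2 (by linarith)) ht
    calc ‖ψ t - ψ n‖ ≤ M * ‖t - (n : ℝ)‖ := h
      _ ≤ M * 1 := by
          have hM0 : 0 ≤ M := by rw [hM]; positivity
          apply mul_le_mul_of_nonneg_left _ hM0
          rw [Real.norm_eq_abs, _root_.abs_of_nonneg (by linarith [ht.1] : (0:ℝ) ≤ t - n)]
          linarith [ht.2]
      _ = M := mul_one M
  -- the outer function φ
  set φ : ℝ → ℂ := fun t => (t : ℂ) ^ (1 - z) / (1 - z) - ψ n * t with hφ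
  have hφd : ∀ t ∈ Set.Icc (n : ℝ) (n + 1),
      HasDerivWithinAt φ (ψ t - ψ n) (Set.Icc (n : ℝ) (n + 1)) t := by
    intro t ht
    have ht0 : (0 : ℝ) < t := lt_of_lt_of_le hn0 ht.1
    have h1 : HasDerivAt (fun y : ℝ => (y : ℂ) ^ (1 - z) / (1 - z))
        ((1 - z) * (t : ℂ) ^ (1 - z - 1) / (1 - z)) t :=
      (hasDerivAt_ofReal_cpow' ht0 hw1).div_const (1 - z)
    have h2 : HasDerivAt (fun y : ℝ => ψ n * (y : ℂ)) (ψ n) t := by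
      simpa using (Complex.ofRealCLM.hasDerivAt (x := t)).const_mul (ψ (n : ℝ))
    have h3 := h1.sub h2
    have he : (1 - z) * (t : ℂ) ^ (1 - z - 1) / (1 - z) = ψ t := by
      rw [mul_div_cancel_left₀ _ hw1, hψ]
      congr 1
      ring
    rw [he] at h3
    exact h3.hasDerivWithinAt
  have hφb : ∀ t ∈ Set.Icc (n : ℝ) (n + 1), ‖ψ t - ψ n‖ ≤ M := inner
  have outer := (convex_Icc (n : ℝ) (n + 1)).norm_image_sub_le_of_norm_hasDerivWithin_le
    hφd hφb (Set.left_mem_Icc.2 (by linarith)) (Set.right_mem_Icc.2 (by linarith))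
  have hnn : ‖((n : ℝ) + 1) - (n : ℝ)‖ = 1 := by norm_num
  rw [hnn, mul_one] at outer
  have hkey : gTerm n z = -(φ ((n : ℝ) + 1) - φ (n : ℝ)) := by
    rw [hφ, hψ]
    have hc1 : (((n : ℝ) : ℂ)) = (n : ℂ) := by push_cast; ring
    have hc2 : ((((n : ℝ) + 1) : ℂ)) = (n : ℂ) + 1 := by push_cast; ring
    simp only [hc1, hc2]
    rw [gTerm]
    push_cast
    have hz1' : z - 1 ≠ 0 := sub_ne_zero.2 hz1
    field_simp
    ring
  rw [hkey, norm_neg]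
  exact outer

noncomputable def gTail (N : ℕ) (z : ℂ) : ℂ := ∑' k : ℕ, gTerm (N + 1 + k) z

lemma summable_rpow_shift (N : ℕ) {p : ℝ} (hp : p < -1) :
    Summable (fun k : ℕ => ((N + 1 + k : ℕ) : ℝ) ^ p) := by
  have h : Summable (fun k : ℕ => ((k : ℝ)) ^ p) := Real.summable_nat_rpow.2 hp
  have h2 := (summable_nat_add_iff (N + 1)).2 h
  refine h2.congr fun k => ?_
  norm_num
  congr 1
  push_cast
  ring

lemma summable_norm_gTerm {N : ℕ} {z : ℂ} (hre : 0 < z.re) (hz1 : z ≠ 1) :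
    Summable (fun k : ℕ => ‖gTerm (N + 1 + k) z‖) := by
  have hs : Summable (fun k : ℕ => ‖z‖ * ((N + 1 + k : ℕ) : ℝ) ^ (-z.re - 1)) :=
    (summable_rpow_shift N (by linarith)).mul_left ‖z‖
  refine Summable.of_nonneg_of_le (fun k => norm_nonneg _) (fun k => ?_) hs
  exact gTerm_norm_le hre hz1 (by omega)

lemma norm_gTail_le {N : ℕ} {z : ℂ} (hre : 0 < z.re) (hz1 : z ≠ 1) {x₀ : ℝ} (hx₀ : 0 < x₀)
    (hx : x₀ ≤ z.re) {B : ℝ} (hB : ‖z‖ ≤ B) :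
    ‖gTail N z‖ ≤ B * ∑' k : ℕ, ((N + 1 + k : ℕ) : ℝ) ^ (-x₀ - 1) := by
  have hsum := summable_norm_gTerm (N := N) hre hz1
  have hs0 : Summable (fun k : ℕ => ((N + 1 + k : ℕ) : ℝ) ^ (-x₀ - 1)) :=
    summable_rpow_shift N (by linarith)
  calc ‖gTail N z‖ ≤ ∑' k : ℕ, ‖gTerm (N + 1 + k) z‖ := norm_tsum_le_tsum_norm hsum
    _ ≤ ∑' k : ℕ, B * ((N + 1 + k : ℕ) : ℝ) ^ (-x₀ - 1) := by
        refine Summable.tsum_le_tsum (fun k => ?_) hsum (hs0.mul_left B)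
        refine (gTerm_norm_le hre hz1 (by omega)).trans ?_
        have h1 : ((N + 1 + k : ℕ) : ℝ) ^ (-z.re - 1) ≤ ((N + 1 + k : ℕ) : ℝ) ^ (-x₀ - 1) := by
          apply Real.rpow_le_rpow_of_exponent_le _ (by linarith)
          exact_mod_cast Nat.one_le_iff_ne_zero.2 (by omega)
        have hb : (0:ℝ) ≤ ((N + 1 + k : ℕ) : ℝ) ^ (-z.re - 1) := by positivity
        calc ‖z‖ * ((N + 1 + k : ℕ) : ℝ) ^ (-z.re - 1)
            ≤ B * ((N + 1 + k : ℕ) : ℝ) ^ (-z.re - 1) := mul_le_mul_of_nonneg_right hB hb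
          _ ≤ B * ((N + 1 + k : ℕ) : ℝ) ^ (-x₀ - 1) :=
              mul_le_mul_of_nonneg_left h1 (le_trans (norm_nonneg z) hB)
    _ = B * ∑' k : ℕ, ((N + 1 + k : ℕ) : ℝ) ^ (-x₀ - 1) := tsum_mul_left

lemma zeta_formula_of_one_lt (N : ℕ) {z : ℂ} (hz : 1 < z.re) :
    riemannZeta z = zetaPartial z N + ((N : ℂ) + 1) ^ (1 - z) / (z - 1) + gTail N z := by
  have hz0 : 0 < z.re := by linarith
  have hz1 : z ≠ 1 := by intro h; rw [h] at hz; simp at hz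
  have hzne : z ≠ 0 := by intro h; rw [h] at hz; norm_num at hz
  have hw0 : -z ≠ 0 := neg_ne_zero.2 hzne
  set f : ℕ → ℂ := fun n => (n : ℂ) ^ (-z) with hf
  have hsumf : Summable f := by
    have := Complex.summable_one_div_nat_cpow.2 hz
    refine this.congr fun n => ?_
    simp only [hf, Complex.cpow_neg, one_div]
  have hzeta : riemannZeta z = ∑' n : ℕ, f n := by
    rw [zeta_eq_tsum_one_div_nat_cpow hz]
    exact tsum_congr fun n => by simp only [hf, Complex.cpow_neg, one_div]
  -- split off the first N+1 terms
  have hsplit := Summable.sum_add_tsum_nat_add (N + 1) hsumf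
  have hrange : ∑ i ∈ Finset.range (N + 1), f i = zetaPartial z N := by
    rw [Finset.range_eq_Ico, Finset.sum_eq_sum_Ico_succ_bot (by omega)]
    have h0 : f 0 = 0 := by simp [hf, Complex.zero_cpow hw0]
    rw [h0, zero_add, Finset.Ico_add_one_right_eq_Icc, zetaPartial]
  -- the telescoping part
  set b : ℕ → ℂ := fun m => (m : ℂ) ^ (1 - z) / (z - 1) with hb
  set d : ℕ → ℂ := fun k => b (N + 1 + k) - b (N + 1 + k + 1) with hd
  have hfd : ∀ k : ℕ, f (N + 1 + k) = d k + gTerm (N + 1 + k) z := by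
    intro k
    rw [hf, hd, hb, gTerm]
    push_cast
    ring
  have hg : Summable (fun k => gTerm (N + 1 + k) z) :=
    (summable_norm_gTerm hz0 hz1).of_norm
  have hfs : Summable (fun k => f (N + 1 + k)) := by
    have := (summable_nat_add_iff (N + 1)).2 hsumf
    exact this.congr fun k => by rw [add_comm]
  have hds : Summable d := by
    refine (hfs.sub hg).congr fun k => ?_
    rw [hfd k]; ring
  -- b tends to zero along the tail
  have hbten : Tendsto (fun k : ℕ => b (N + 1 + k)) atTop (𝓝 0) := by
    apply squeeze_zero_norm (a := fun k : ℕ => ((N + 1 + k : ℕ) : ℝ) ^ (1 - z.re) * ‖z - 1‖⁻¹)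
    · intro k
      rw [hb, norm_div,
        ← Complex.ofReal_natCast,
        Complex.norm_cpow_eq_rpow_re_of_pos (by positivity) , div_eq_mul_inv]
      simp
    · have h1 : Tendsto (fun k : ℕ => ((N + 1 + k : ℕ) : ℝ)) atTop atTop := by
        apply tendsto_natCast_atTop_atTop.comp
        exact Tendsto.congr (fun k => by omega) (tendsto_add_atTop_nat (N + 1))
      have h2 := (tendsto_rpow_neg_atTop (by linarith : (0:ℝ) < z.re - 1)).comp h1
      have h3 : (fun k : ℕ => ((N + 1 + k : ℕ) : ℝ) ^ (-(z.re - 1)))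
          = fun k : ℕ => ((N + 1 + k : ℕ) : ℝ) ^ (1 - z.re) := by
        funext k; congr 1; ring
      have h4 : Tendsto (fun k : ℕ => ((N + 1 + k : ℕ) : ℝ) ^ (1 - z.re)) atTop (𝓝 0) := by
        rw [← h3]; exact h2
      simpa using h4.mul_const ‖z - 1‖⁻¹
  have hdsum : HasSum d (b (N + 1)) := by
    rw [hds.hasSum_iff_tendsto_nat]
    have hp : ∀ n : ℕ, ∑ k ∈ Finset.range n, d k = b (N + 1) - b (N + 1 + n) := by
      intro n
      rw [hd]
      have := Finset.sum_range_sub' (fun k => b (N + 1 + k)) n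
      simpa [add_assoc] using this
    simp only [hp]
    simpa using tendsto_const_nhds.sub hbten
  have htail : ∑' k : ℕ, f (k + (N + 1)) = ((N : ℂ) + 1) ^ (1 - z) / (z - 1) + gTail N z := by
    have e1 : ∑' k : ℕ, f (k + (N + 1)) = ∑' k : ℕ, f (N + 1 + k) :=
      tsum_congr fun k => by rw [add_comm]
    rw [e1]
    have e2 : ∑' k : ℕ, f (N + 1 + k) = ∑' k : ℕ, (d k + gTerm (N + 1 + k) z) :=
      tsum_congr hfd
    rw [e2, Summable.tsum_add hds hg, hdsum.tsum_eq, gTail]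
    congr 1
    rw [hb]
    push_cast
    ring
  rw [hzeta, ← hsplit, hrange, htail]; ring

lemma gTerm_differentiableAt {n : ℕ} (hn : 1 ≤ n) {z : ℂ} (hz : z ≠ 1) :
    DifferentiableAt ℂ (gTerm n) z := by
  have hn0 : (n : ℂ) ≠ 0 := Nat.cast_ne_zero.2 (by omega)
  have hn1 : (n : ℂ) + 1 ≠ 0 := by
    have : ((n + 1 : ℕ) : ℂ) ≠ 0 := Nat.cast_ne_zero.2 (by omega)
    push_cast at this; exact this
  unfold gTerm
  apply DifferentiableAt.sub
  · exact (differentiable_neg.differentiableAt).const_cpow (Or.inl hn0)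
  · apply DifferentiableAt.div
    · apply DifferentiableAt.sub
      · exact ((differentiableAt_const _).sub differentiableAt_id).const_cpow (Or.inl hn0)
      · exact ((differentiableAt_const _).sub differentiableAt_id).const_cpow (Or.inl hn1)
    · exact differentiableAt_id.sub (differentiableAt_const 1)
    · exact sub_ne_zero.2 hz

lemma gTail_differentiableAt (N : ℕ) {z₀ : ℂ} (h0 : 0 < z₀.re) (h1 : z₀ ≠ 1) :
    DifferentiableAt ℂ (gTail N) z₀ := by
  set δ : ℝ := z₀.re / 2 with hδ
  have hδ0 : 0 < δ := by positivity
  set R : ℝ := ‖z₀‖ + 1 with hR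
  set s : Set ℂ := {z : ℂ | δ < z.re ∧ (‖z‖ < R ∧ z ≠ 1)} with hs
  have hs_open : IsOpen s := by
    apply IsOpen.and
    · exact isOpen_lt continuous_const Complex.continuous_re
    · exact IsOpen.and (isOpen_lt continuous_norm continuous_const) isOpen_ne
  have hz₀s : z₀ ∈ s := ⟨by rw [hδ]; linarith, by rw [hR]; linarith, h1⟩
  have hd : DifferentiableOn ℂ (fun z => ∑' k : ℕ, gTerm (N + 1 + k) z) s := by
    apply differentiableOn_tsum_of_summable_norm
      (u := fun k : ℕ => R * ((N + 1 + k : ℕ) : ℝ) ^ (-δ - 1))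
    · exact (summable_rpow_shift N (by linarith)).mul_left R
    · exact fun k => fun z hz => (gTerm_differentiableAt (by omega) hz.2.2).differentiableWithinAt
    · exact hs_open
    · intro k w hw
      have hw0 : 0 < w.re := lt_trans hδ0 hw.1
      refine (gTerm_norm_le hw0 hw.2.2 (by omega)).trans ?_
      have hbase : (1 : ℝ) ≤ ((N + 1 + k : ℕ) : ℝ) :=
        by exact_mod_cast Nat.one_le_iff_ne_zero.2 (by omega)
      have h1' : ((N + 1 + k : ℕ) : ℝ) ^ (-w.re - 1) ≤ ((N + 1 + k : ℕ) : ℝ) ^ (-δ - 1) :=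
        Real.rpow_le_rpow_of_exponent_le hbase (by linarith [hw.1])
      have hb : (0:ℝ) ≤ ((N + 1 + k : ℕ) : ℝ) ^ (-w.re - 1) := by positivity
      calc ‖w‖ * ((N + 1 + k : ℕ) : ℝ) ^ (-w.re - 1)
          ≤ R * ((N + 1 + k : ℕ) : ℝ) ^ (-w.re - 1) :=
            mul_le_mul_of_nonneg_right (le_of_lt hw.2.1) hb
        _ ≤ R * ((N + 1 + k : ℕ) : ℝ) ^ (-δ - 1) :=
            mul_le_mul_of_nonneg_left h1' (by rw [hR]; positivity)
  exact hd.differentiableAt (hs_open.mem_nhds hz₀s)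

lemma isPreconnected_U : IsPreconnected {z : ℂ | 0 < z.re ∧ z ≠ 1} := by
  set C1 : Set ℂ := {z | 0 < z.re ∧ z.re < 1} with hC1
  set C2 : Set ℂ := {z | 1 < z.re} with hC2
  set C3 : Set ℂ := {z | 0 < z.re ∧ 0 < z.im} with hC3
  set C4 : Set ℂ := {z | 0 < z.re ∧ z.im < 0} with hC4
  have hc1 : Convex ℝ C1 := (convex_halfSpace_re_gt 0).inter (convex_halfSpace_re_lt 1)
  have hc2 : Convex ℝ C2 := convex_halfSpace_re_gt 1
  have hc3 : Convex ℝ C3 := (convex_halfSpace_re_gt 0).inter (convex_halfSpace_im_gt 0)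
  have hc4 : Convex ℝ C4 := (convex_halfSpace_re_gt 0).inter (convex_halfSpace_im_lt 0)
  have w1 : ((1:ℝ)/2 + (1/2 : ℝ) * Complex.I) ∈ C1 ∩ C3 := by
    constructor <;> constructor <;> norm_num
  have w2 : ((1:ℝ)/2 - (1/2 : ℝ) * Complex.I) ∈ C1 ∩ C4 := by
    refine ⟨⟨?_, ?_⟩, ?_, ?_⟩ <;> norm_num
  have w3 : ((2:ℝ) + (1:ℝ) * Complex.I) ∈ C3 ∩ C2 := by
    refine ⟨⟨?_, ?_⟩, ?_⟩ <;> norm_num [hC2]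
  have h13 : IsPreconnected (C1 ∪ C3) :=
    IsPreconnected.union _ w1.1 w1.2 hc1.isPreconnected hc3.isPreconnected
  have h134 : IsPreconnected (C1 ∪ C3 ∪ C4) :=
    IsPreconnected.union _ (Set.mem_union_left _ w2.1) w2.2 h13 hc4.isPreconnected
  have h1342 : IsPreconnected (C1 ∪ C3 ∪ C4 ∪ C2) :=
    IsPreconnected.union _ (Set.mem_union_left _ (Set.mem_union_right _ w3.1)) w3.2 h134
      hc2.isPreconnected
  have : {z : ℂ | 0 < z.re ∧ z ≠ 1} = C1 ∪ C3 ∪ C4 ∪ C2 := by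
    ext z
    simp only [Set.mem_setOf_eq, Set.mem_union, hC1, hC2, hC3, hC4]
    constructor
    · rintro ⟨h0, h1⟩
      rcases lt_trichotomy z.im 0 with him | him | him
      · exact Or.inl (Or.inr ⟨h0, him⟩)
      · rcases lt_trichotomy z.re 1 with hre | hre | hre
        · exact Or.inl (Or.inl (Or.inl ⟨h0, hre⟩))
        · exact absurd (Complex.ext hre him) h1
        · exact Or.inr hre
      · exact Or.inl (Or.inl (Or.inr ⟨h0, him⟩))
    · rintro (((⟨h0, hre⟩ | ⟨h0, him⟩) | ⟨h0, him⟩) | hre)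
      · exact ⟨h0, fun h => by rw [h] at hre; norm_num at hre⟩
      · exact ⟨h0, fun h => by rw [h] at him; norm_num at him⟩
      · exact ⟨h0, fun h => by rw [h] at him; norm_num at him⟩
      · exact ⟨by linarith, fun h => by rw [h] at hre; norm_num at hre⟩
  rw [this]
  exact h1342

lemma zeta_formula (N : ℕ) {z : ℂ} (h0 : 0 < z.re) (h1 : z ≠ 1) :
    riemannZeta z = zetaPartial z N + ((N : ℂ) + 1) ^ (1 - z) / (z - 1) + gTail N z := by
  set U : Set ℂ := {z : ℂ | 0 < z.re ∧ z ≠ 1} with hU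
  have hUopen : IsOpen U :=
    IsOpen.and (isOpen_lt continuous_const Complex.continuous_re) isOpen_ne
  have hF : AnalyticOnNhd ℂ riemannZeta U :=
    DifferentiableOn.analyticOnNhd
      (fun w hw => (differentiableAt_riemannZeta hw.2).differentiableWithinAt) hUopen
  have hG : AnalyticOnNhd ℂ
      (fun w => zetaPartial w N + ((N : ℂ) + 1) ^ (1 - w) / (w - 1) + gTail N w) U := by
    apply DifferentiableOn.analyticOnNhd _ hUopen
    intro w hw
    apply DifferentiableAt.differentiableWithinAt
    have hn1 : (N : ℂ) + 1 ≠ 0 := by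
      have : ((N + 1 : ℕ) : ℂ) ≠ 0 := Nat.cast_ne_zero.2 (by omega)
      push_cast at this; exact this
    apply DifferentiableAt.add
    apply DifferentiableAt.add
    · unfold zetaPartial
      apply DifferentiableAt.fun_sum
      intro n hn
      have : (n : ℂ) ≠ 0 := Nat.cast_ne_zero.2 (by
        have := Finset.mem_Icc.1 hn; omega)
      exact (differentiable_neg.differentiableAt).const_cpow (Or.inl this)
    · apply DifferentiableAt.div
      · exact ((differentiableAt_const _).sub differentiableAt_id).const_cpow (Or.inl hn1)
      · exact differentiableAt_id.sub (differentiableAt_const 1)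
      · exact sub_ne_zero.2 hw.2
    · exact gTail_differentiableAt N hw.1 hw.2
  have h2mem : (2 : ℂ) ∈ U := by
    constructor
    · norm_num
    · norm_num
  have heq : riemannZeta =ᶠ[𝓝 (2 : ℂ)]
      fun w => zetaPartial w N + ((N : ℂ) + 1) ^ (1 - w) / (w - 1) + gTail N w := by
    have hmem : {w : ℂ | 1 < w.re} ∈ 𝓝 (2 : ℂ) := by
      apply (isOpen_lt continuous_const Complex.continuous_re).mem_nhds
      norm_num
    filter_upwards [hmem] with w hw using zeta_formula_of_one_lt N hw
  exact hF.eqOn_of_preconnected_of_eventuallyEq hG isPreconnected_U h2mem heq ⟨h0, h1⟩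

lemma cot_aux {u : ℝ} (h0 : 0 < u) (h1 : u ≤ 1) :
    |u * Real.cos u / Real.sin u - 1| ≤ u ^ 2 := by
  have hupi : u < Real.pi := lt_of_le_of_lt h1 (by linarith [Real.pi_gt_three])
  have hsin : 0 < Real.sin u := Real.sin_pos_of_pos_of_lt_pi h0 hupi
  have hs1 : u - u ^ 3 / 4 < Real.sin u := by
    have := Real.sin_gt_sub_cube h0; linarith [pow_pos h0 3]
  have hs2 : Real.sin u < u := Real.sin_lt h0
  have hc1 : Real.cos u ≤ 1 := Real.cos_le_one u
  have hc2 : 1 - u ^ 2 / 2 ≤ Real.cos u := Real.one_sub_sq_div_two_le_cos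
  have e : u * Real.cos u / Real.sin u - 1 = (u * Real.cos u - Real.sin u) / Real.sin u := by
    field_simp
  rw [e, abs_div, _root_.abs_of_pos hsin, div_le_iff₀ hsin]
  rw [abs_le]
  have hu3 : u ^ 3 ≤ u := by
    calc u ^ 3 ≤ u ^ 1 := pow_le_pow_of_le_one h0.le h1 (by norm_num)
      _ = u := pow_one u
  have hf1 : u * Real.cos u ≤ u := by nlinarith
  have hf2 : u ^ 2 * (u - u ^ 3 / 4) ≤ u ^ 2 * Real.sin u :=
    mul_le_mul_of_nonneg_left hs1.le (sq_nonneg u)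
  have hf3 : u ^ 5 ≤ u ^ 3 := by
    calc u ^ 5 = u ^ 3 * u ^ 2 := by ring
      _ ≤ u ^ 3 * 1 ^ 2 := by
          apply mul_le_mul_of_nonneg_left _ (by positivity)
          exact pow_le_pow_left₀ h0.le h1 2
      _ = u ^ 3 := by ring
  have hf4 : u * (1 - u ^ 2 / 2) ≤ u * Real.cos u := mul_le_mul_of_nonneg_left hc2 h0.le
  constructor
  · nlinarith
  · nlinarith

lemma cot_even (y h : ℝ) : y / Real.tan (y * h) = |y| / Real.tan (|y| * h) := by
  rcases abs_cases y with ⟨ha, _⟩ | ⟨ha, _⟩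
  · rw [ha]
  · rw [ha, neg_mul, Real.tan_neg, neg_div_neg_eq]

lemma cot_bound {y h B : ℝ} (hy : y ≠ 0) (hyB : |y| ≤ B) (hh0 : 0 < h)
    (hh1 : |y| * h ≤ 1) (hhle : h ≤ 1) :
    |y / Real.tan (y * h) - 1 / h| ≤ B ^ 2 := by
  set a := |y| with ha
  have ha0 : 0 < a := abs_pos.2 hy
  set u := a * h with hu
  have hu0 : 0 < u := by positivity
  have hu1 : u ≤ 1 := hh1
  rw [cot_even y h, ← ha, ← hu]
  have htan : Real.tan u = Real.sin u / Real.cos u := Real.tan_eq_sin_div_cos u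
  have hsin : 0 < Real.sin u := by
    apply Real.sin_pos_of_pos_of_lt_pi hu0 (lt_of_le_of_lt hu1 (by linarith [Real.pi_gt_three]))
  have e : a / Real.tan u - 1 / h = (1 / h) * (u * Real.cos u / Real.sin u - 1) := by
    rw [htan, div_div_eq_mul_div, hu]
    field_simp
  rw [e, abs_mul, _root_.abs_of_pos (by positivity : (0:ℝ) < 1 / h)]
  have := cot_aux hu0 hu1
  calc 1 / h * |u * Real.cos u / Real.sin u - 1| ≤ 1 / h * u ^ 2 :=
        mul_le_mul_of_nonneg_left this (by positivity)
    _ = a ^ 2 * h := by rw [hu]; field_simp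
    _ ≤ B ^ 2 * 1 := by
        apply mul_le_mul _ hhle (le_of_lt hh0) (by positivity)
        exact pow_le_pow_left₀ (le_of_lt ha0) hyB 2
    _ = B ^ 2 := mul_one _

lemma correction_est {z : ℂ} (h0 : 0 < z.re) (him : z.im ≠ 0) {x₀ B : ℝ}
    (hx₀ : 0 < x₀) (hx : x₀ ≤ z.re) (hB : ‖z‖ ≤ B) {N : ℕ} (hN : B ≤ (N : ℝ) + 1) :
    ‖radialCorrection z N - ((N : ℂ) + 1) ^ (1 - z) / (z - 1)‖ ≤
      ((N : ℝ) + 1) ^ (-x₀) * ((1 + B + B ^ 2) * ‖(1 - z)⁻¹‖) := by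
  have hz1 : z ≠ 1 := fun h => him (by rw [h]; simp)
  have h1z : (1 : ℂ) - z ≠ 0 := sub_ne_zero.2 (Ne.symm hz1)
  have hz1' : z - 1 ≠ 0 := sub_ne_zero.2 hz1
  set h : ℝ := Real.log (((N : ℝ) + 2) / ((N : ℝ) + 1)) with hh
  have hN1 : (0 : ℝ) < (N : ℝ) + 1 := by positivity
  have hN2 : (0 : ℝ) < (N : ℝ) + 2 := by positivity
  have hv1 : (1 : ℝ) < ((N : ℝ) + 2) / ((N : ℝ) + 1) := by
    rw [lt_div_iff₀ hN1]; linarith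
  have hh0 : 0 < h := Real.log_pos hv1
  have hh_le : h ≤ 1 / ((N : ℝ) + 1) := by
    have := Real.log_le_sub_one_of_pos (lt_trans zero_lt_one hv1)
    rw [hh]
    calc Real.log (((N : ℝ) + 2) / ((N : ℝ) + 1)) ≤ ((N : ℝ) + 2) / ((N : ℝ) + 1) - 1 := this
      _ = 1 / ((N : ℝ) + 1) := by field_simp; norm_num
  have hh_ge : 1 / ((N : ℝ) + 2) ≤ h := by
    have := Real.one_sub_inv_le_log_of_pos (lt_trans zero_lt_one hv1)
    rw [hh]
    calc (1 : ℝ) / ((N : ℝ) + 2) = 1 - (((N : ℝ) + 2) / ((N : ℝ) + 1))⁻¹ := by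
          rw [inv_div]; field_simp; norm_num
      _ ≤ Real.log (((N : ℝ) + 2) / ((N : ℝ) + 1)) := this
  have hhle1 : h ≤ 1 := hh_le.trans (by rw [div_le_one hN1]; linarith)
  -- bounds on the scalar part
  have habs_im : |z.im| ≤ B := (Complex.abs_im_le_norm z).trans hB
  have habs_re : |z.re| ≤ B := (Complex.abs_re_le_norm z).trans hB
  have himh : |z.im| * h ≤ 1 := by
    calc |z.im| * h ≤ B * (1 / ((N : ℝ) + 1)) :=
          mul_le_mul habs_im hh_le hh0.le ((abs_nonneg _).trans habs_im)
      _ ≤ 1 := by rw [mul_one_div, div_le_one hN1]; exact hN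
  have hcot : |z.im / Real.tan (z.im * h) - 1 / h| ≤ B ^ 2 :=
    cot_bound him habs_im hh0 himh hhle1
  have hinv : (N : ℝ) + 1 ≤ 1 / h ∧ 1 / h ≤ (N : ℝ) + 2 := by
    constructor
    · rw [le_div_iff₀ hh0]
      calc ((N : ℝ) + 1) * h ≤ ((N : ℝ) + 1) * (1 / ((N : ℝ) + 1)) := by gcongr
        _ = 1 := by field_simp
    · rw [div_le_iff₀ hh0]
      calc (1 : ℝ) = ((N : ℝ) + 2) * (1 / ((N : ℝ) + 2)) := by field_simp
        _ ≤ ((N : ℝ) + 2) * h := by gcongr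
  set S : ℝ := 1 - z.re - z.im / Real.tan (z.im * h) + ((N : ℝ) + 1) with hS
  have hSbound : |S| ≤ 1 + B + B ^ 2 := by
    have e : S = (((N : ℝ) + 2) - 1 / h) + (1 / h - z.im / Real.tan (z.im * h)) + (- z.re) := by
      rw [hS]; ring
    rw [e]
    calc |(((N : ℝ) + 2) - 1 / h) + (1 / h - z.im / Real.tan (z.im * h)) + (- z.re)|
        ≤ |(((N : ℝ) + 2) - 1 / h) + (1 / h - z.im / Real.tan (z.im * h))| + |(- z.re)| :=
          abs_add_le _ _
      _ ≤ |((N : ℝ) + 2) - 1 / h| + |1 / h - z.im / Real.tan (z.im * h)| + |(- z.re)| := by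
          gcongr
          exact abs_add_le _ _
      _ ≤ 1 + B ^ 2 + B := by
          gcongr
          · rw [abs_le]; constructor <;> [linarith [hinv.2]; linarith [hinv.1]]
          · rw [abs_sub_comm]; exact hcot
          · rw [abs_neg]; exact habs_re
      _ = 1 + B + B ^ 2 := by ring
  -- the algebraic identity
  have hbase : ((N : ℂ) + 1) ≠ 0 := by
    have : ((N + 1 : ℕ) : ℂ) ≠ 0 := Nat.cast_ne_zero.2 (by omega)
    push_cast at this; exact this
  have hiden : radialCorrection z N - ((N : ℂ) + 1) ^ (1 - z) / (z - 1)
      = ((N : ℂ) + 1) ^ (-z) * ((S : ℝ) * (1 - z)⁻¹) := by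
    rw [radialCorrection, hS]
    have hsplit : ((N : ℂ) + 1) ^ (1 - z) = ((N : ℂ) + 1) * ((N : ℂ) + 1) ^ (-z) := by
      rw [show (1 : ℂ) - z = 1 + -z by ring, Complex.cpow_add _ _ hbase, Complex.cpow_one]
    rw [hsplit]
    push_cast
    rw [← hh]
    field_simp
    ring
  rw [hiden, norm_mul, norm_mul]
  have hnormA : ‖((N : ℂ) + 1) ^ (-z)‖ ≤ ((N : ℝ) + 1) ^ (-x₀) := by
    have hcast : ((N : ℂ) + 1) = (((N : ℝ) + 1 : ℝ) : ℂ) := by push_cast; ring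
    rw [hcast, Complex.norm_cpow_eq_rpow_re_of_pos hN1]
    have : (-z).re = -z.re := by simp
    rw [this]
    apply Real.rpow_le_rpow_of_exponent_le (by linarith) (by linarith)
  have hnormS : ‖((S : ℝ) : ℂ)‖ ≤ 1 + B + B ^ 2 := by
    rw [Complex.norm_real]; exact hSbound
  calc ‖((N : ℂ) + 1) ^ (-z)‖ * (‖((S : ℝ) : ℂ)‖ * ‖(1 - z)⁻¹‖)
      ≤ ((N : ℝ) + 1) ^ (-x₀) * ((1 + B + B ^ 2) * ‖(1 - z)⁻¹‖) := by
        have hnn : (0:ℝ) ≤ ‖(1 - z)⁻¹‖ := norm_nonneg _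
        apply mul_le_mul hnormA (mul_le_mul_of_nonneg_right hnormS hnn) (by positivity)
          (by positivity)



/-- On every compact subset `K` of `Ω = {z : 0 < Re z, Im z ≠ 0}`, the functions
`z ↦ c_N(z)` converge uniformly to the analytically continued Riemann zeta function. -/
theorem radialSeq_tendstoUniformlyOn_riemannZeta (K : Set ℂ) (hK : IsCompact K)
    (hKΩ : K ⊆ {z : ℂ | 0 < z.re ∧ z.im ≠ 0}) :
    TendstoUniformlyOn (fun (N : ℕ) (z : ℂ) => radialSeq z N) riemannZeta atTop K := by
  rcases K.eq_empty_or_nonempty with rfl | hne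
  · simp [TendstoUniformlyOn]
  -- constants from compactness
  obtain ⟨zm, hzmK, hzm⟩ := hK.exists_isMinOn hne Complex.continuous_re.continuousOn
  set x₀ : ℝ := zm.re with hx₀def
  have hx₀pos : 0 < x₀ := (hKΩ hzmK).1
  have hx₀le : ∀ z ∈ K, x₀ ≤ z.re := fun z hz => hzm hz
  obtain ⟨B, hB⟩ := hK.exists_bound_of_continuousOn continuousOn_id
  have hB' : ∀ z ∈ K, ‖z‖ ≤ B := fun z hz => hB z hz
  have hB0 : 0 ≤ B := le_trans (norm_nonneg _) (hB' _ hne.some_mem)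
  have hKne1 : ∀ z ∈ K, (1 : ℂ) - z ≠ 0 := by
    intro z hz
    have : z ≠ 1 := fun e => (hKΩ hz).2 (by rw [e]; simp)
    exact sub_ne_zero.2 (Ne.symm this)
  have hcont : ContinuousOn (fun z : ℂ => (1 - z)⁻¹) K :=
    (continuousOn_const.sub continuousOn_id).inv₀ hKne1
  obtain ⟨C₁, hC₁⟩ := hK.exists_bound_of_continuousOn hcont
  -- the tail bound sequence
  set v : ℕ → ℝ := fun k => (k : ℝ) ^ (-x₀ - 1) with hv
  set T : ℕ → ℝ := fun N => ∑' k : ℕ, ((N + 1 + k : ℕ) : ℝ) ^ (-x₀ - 1) with hT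
  have hTeq : T = fun N => ∑' k : ℕ, v (k + (N + 1)) := by
    funext N
    refine tsum_congr fun k => ?_
    have hnk : N + 1 + k = k + (N + 1) := by omega
    rw [hv, hnk]
  have hT0 : Tendsto T atTop (𝓝 0) := by
    rw [hTeq]
    exact (tendsto_sum_nat_add v).comp (tendsto_add_atTop_nat 1)
  have hP0 : Tendsto (fun N : ℕ => ((N : ℝ) + 1) ^ (-x₀)) atTop (𝓝 0) :=
    (tendsto_rpow_neg_atTop hx₀pos).comp
      (tendsto_atTop_add_const_right atTop 1 tendsto_natCast_atTop_atTop)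
  rw [Metric.tendstoUniformlyOn_iff]
  intro ε hε
  have hBnd : Tendsto
      (fun N : ℕ => ((N : ℝ) + 1) ^ (-x₀) * ((1 + B + B ^ 2) * C₁) + B * T N) atTop (𝓝 0) := by
    have := (hP0.mul_const ((1 + B + B ^ 2) * C₁)).add (hT0.const_mul B)
    simpa only [zero_mul, mul_zero, add_zero] using this
  have hev1 := hBnd.eventually (gt_mem_nhds hε)
  have hev2 : ∀ᶠ N : ℕ in atTop, B ≤ (N : ℝ) + 1 := by
    obtain ⟨M, hM⟩ := exists_nat_ge B
    filter_upwards [eventually_ge_atTop M] with N hN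
    have : (M : ℝ) ≤ (N : ℝ) := by exact_mod_cast hN
    linarith
  filter_upwards [hev1, hev2] with N h1 h2
  intro z hz
  obtain ⟨h0z, himz⟩ := hKΩ hz
  have hz1 : z ≠ 1 := fun e => himz (by rw [e]; simp)
  rw [dist_eq_norm]
  have hform := zeta_formula N h0z hz1
  have hsplit : riemannZeta z - radialSeq z N =
      -(radialCorrection z N - ((N : ℂ) + 1) ^ (1 - z) / (z - 1)) + gTail N z := by
    rw [hform, radialSeq]; ring
  rw [hsplit]
  have e1 : ‖radialCorrection z N - ((N : ℂ) + 1) ^ (1 - z) / (z - 1)‖ ≤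
      ((N : ℝ) + 1) ^ (-x₀) * ((1 + B + B ^ 2) * C₁) := by
    refine (correction_est h0z himz hx₀pos (hx₀le z hz) (hB' z hz) h2).trans ?_
    have hq : (0:ℝ) ≤ 1 + B + B ^ 2 := by nlinarith [sq_nonneg (B + 1)]
    apply mul_le_mul_of_nonneg_left _ (by positivity)
    exact mul_le_mul_of_nonneg_left (hC₁ z hz) hq
  have e2 : ‖gTail N z‖ ≤ B * T N :=
    norm_gTail_le h0z hz1 hx₀pos (hx₀le z hz) (hB' z hz)
  calc ‖-(radialCorrection z N - ((N : ℂ) + 1) ^ (1 - z) / (z - 1)) + gTail N z‖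
      ≤ ‖-(radialCorrection z N - ((N : ℂ) + 1) ^ (1 - z) / (z - 1))‖ + ‖gTail N z‖ :=
        norm_add_le _ _
    _ ≤ ((N : ℝ) + 1) ^ (-x₀) * ((1 + B + B ^ 2) * C₁) + B * T N := by
        rw [norm_neg]; exact add_le_add e1 e2
    _ < ε := h1
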